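/- For positive integers p and q, a hypergraph H is (p,q)-Helly if and only if Φ_q(H) is p-Helly (i.e., (p,1)-Helly). -/

import Mathlib

/-- The core of a family of sets: the elements lying in all members (and in at least one,
so that the core of the empty family is empty, matching that the vertex set of a
hypergraph is the union of its edges).  For a nonempty family this is just the
intersection of all members. -/
def hCore {β : Type*} (F : Finset (Finset β)) : Set β :=
  {x | (∃ E ∈ F, x ∈ E) ∧ ∀ E ∈ F, x ∈ E}

/-- A family is `(p,q)`-intersecting if every nonempty subfamily of at most `p` sets
has core of cardinality at least `q`. -/
def IsIntersecting {β : Type*} (p q : ℕ) (F : Finset (Finset β)) : Prop :=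
  ∀ F' ⊆ F, F'.Nonempty → F'.card ≤ p → q ≤ (hCore F').ncard

/-- A family is `(p,q)`-Helly if every nonempty `(p,q)`-intersecting subfamily
has core of cardinality at least `q`. -/
def IsHelly {β : Type*} (p q : ℕ) (F : Finset (Finset β)) : Prop :=
  ∀ F' ⊆ F, F'.Nonempty → IsIntersecting p q F' → q ≤ (hCore F').ncard
/-- The hypergraph `Φ_q(H)`: its vertices are the `q`-subsets of vertices of `H` contained
in some edge, and its edges are the families `φ_q(E)` of all `q`-subsets of `E`, for edges
`E` of `H` with at least `q` elements. -/
def Phi {α : Type*} [DecidableEq α] (q : ℕ) (H : Finset (Finset α)) :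
    Finset (Finset (Finset α)) :=
  (H.filter fun E => q ≤ E.card).image fun E => Finset.powersetCard q E

/-- For positive integers `p` and `q`, a hypergraph `H` is `(p,q)`-Helly iff `Φ_q(H)`
is `p`-Helly, i.e. `(p,1)`-Helly. -/
lemma core_subset {β : Type*} {F : Finset (Finset β)} {E : Finset β} (hE : E ∈ F) :
    hCore F ⊆ ↑E := fun _ hx => hx.2 E hE

lemma core_finite {β : Type*} {F : Finset (Finset β)} {E : Finset β} (hE : E ∈ F) :
    (hCore F).Finite := E.finite_toSet.subset (core_subset hE)

lemma mem_core {β : Type*} {F : Finset (Finset β)} (hF : F.Nonempty) {x : β}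
    (h : ∀ E ∈ F, x ∈ E) : x ∈ hCore F :=
  ⟨⟨hF.choose, hF.choose_spec, h _ hF.choose_spec⟩, h⟩

/-- Extract a q-subset from a core of size ≥ q. -/
lemma exists_qsubset {β : Type*} {F : Finset (Finset β)} {E₀ : Finset β} (hE₀ : E₀ ∈ F)
    {q : ℕ} (h : q ≤ (hCore F).ncard) :
    ∃ x : Finset β, x.card = q ∧ ∀ E ∈ F, ↑x ⊆ (E : Set β) := by
  classical
  have hfin := core_finite hE₀
  rw [Set.ncard_eq_toFinset_card _ hfin] at h
  obtain ⟨x, hxsub, hxcard⟩ := Finset.exists_subset_card_eq h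
  refine ⟨x, hxcard, fun E hE y hy => ?_⟩
  have : y ∈ hCore F := by
    have := hxsub hy; rwa [Set.Finite.mem_toFinset] at this
  exact this.2 E hE

lemma exists_preimage {β γ : Type*} [DecidableEq γ] (f : β → γ) (A : Finset β)
    {G : Finset γ} (h : G ⊆ A.image f) :
    ∃ S ⊆ A, S.image f = G ∧ S.card ≤ G.card := by
  classical
  have h' : ∀ g ∈ G, ∃ E, E ∈ A ∧ f E = g := by
    intro g hg
    obtain ⟨E, hE, hfE⟩ := Finset.mem_image.mp (h hg)
    exact ⟨E, hE, hfE⟩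
  refine ⟨G.attach.image (fun g => (h' g.1 g.2).choose), ?_, ?_, ?_⟩
  · intro E hE
    obtain ⟨g, _, rfl⟩ := Finset.mem_image.mp hE
    exact (h' g.1 g.2).choose_spec.1
  · ext y
    simp only [Finset.image_image, Finset.mem_image, Finset.mem_attach, true_and,
      Subtype.exists, Function.comp]
    constructor
    · rintro ⟨g, hg, rfl⟩
      rw [(h' g hg).choose_spec.2]; exact hg
    · intro hy
      exact ⟨y, hy, (h' y hy).choose_spec.2⟩
  · calc _ ≤ G.attach.card := Finset.card_image_le
      _ = G.card := Finset.card_attach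

theorem stmt6 {α : Type*} [DecidableEq α] (p q : ℕ) (hp : 0 < p) (hq : 0 < q)
    (H : Finset (Finset α)) (hne : ∀ E ∈ H, E.Nonempty) :
    IsHelly p q H ↔ IsHelly p 1 (Phi q H) := by
  classical
  set φ : Finset α → Finset (Finset α) := fun E => Finset.powersetCard q E with hφ
  constructor
  · -- H (p,q)-Helly → Φ p-Helly
    intro hH G hGsub hGne hGint
    -- pull back G to a family S over H.filter
    obtain ⟨S, hSsub, hSimg, _⟩ := exists_preimage φ (H.filter fun E => q ≤ E.card) hGsub
    have hSne : S.Nonempty := by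
      rw [← Finset.image_nonempty (f := φ), hSimg]; exact hGne
    have hSsubH : S ⊆ H := hSsub.trans (Finset.filter_subset _ _)
    have hSint : IsIntersecting p q S := by
      intro T hTsub hTne hTcard
      have hTimg : T.image φ ⊆ G := by rw [← hSimg]; exact Finset.image_subset_image hTsub
      have hTimgne : (T.image φ).Nonempty := hTne.image φ
      have h1 := hGint _ hTimg hTimgne (Finset.card_image_le.trans hTcard)
      obtain ⟨x, hx⟩ := Set.nonempty_of_ncard_ne_zero
        (s := hCore (T.image φ)) (by omega)
      -- x is a common q-subset of all E ∈ T
      obtain ⟨E₀, hE₀⟩ := id hTne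
      have hxsub : ↑x ⊆ hCore T := by
        intro y hy
        refine mem_core hTne (fun E hE => ?_)
        have := hx.2 (φ E) (Finset.mem_image_of_mem φ hE)
        rw [hφ, Finset.mem_powersetCard] at this
        exact this.1 hy
      have hxq : x.card = q := by
        have := hx.2 (φ E₀) (Finset.mem_image_of_mem φ hE₀)
        rw [hφ, Finset.mem_powersetCard] at this
        exact this.2
      calc q = (↑x : Set α).ncard := by rw [Set.ncard_coe_finset, hxq]
        _ ≤ (hCore T).ncard := Set.ncard_le_ncard hxsub (core_finite hE₀)
    have hcore := hH S hSsubH hSne hSint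
    obtain ⟨E₀, hE₀⟩ := hSne
    obtain ⟨x, hxq, hxsub⟩ := exists_qsubset hE₀ hcore
    have hxG : x ∈ hCore G := by
      refine mem_core hGne (fun g hg => ?_)
      rw [← hSimg] at hg
      obtain ⟨E, hE, rfl⟩ := Finset.mem_image.mp hg
      rw [hφ, Finset.mem_powersetCard]
      exact ⟨fun y hy => hxsub E hE hy, hxq⟩
    have hfin : (hCore G).Finite := core_finite hGne.choose_spec
    exact (Set.ncard_pos hfin).mpr ⟨x, hxG⟩
  · -- Φ p-Helly → H (p,q)-Helly
    intro hΦ F' hFsub hFne hFint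
    -- every edge of F' has at least q elements
    have hcard : ∀ E ∈ F', q ≤ E.card := by
      intro E hE
      have h1 := hFint {E} (Finset.singleton_subset_iff.mpr hE) ⟨E, Finset.mem_singleton_self E⟩
        (by rw [Finset.card_singleton]; exact hp)
      have : hCore {E} = (↑E : Set α) := by
        ext y
        constructor
        · exact fun hy => hy.2 E (Finset.mem_singleton_self E)
        · intro hy
          exact ⟨⟨E, Finset.mem_singleton_self E, hy⟩,
            fun E' hE' => by rw [Finset.mem_singleton.mp hE']; exact hy⟩
      rwa [this, Set.ncard_coe_finset] at h1
    set G := F'.image φ with hG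
    have hGsub : G ⊆ Phi q H := by
      intro g hg
      obtain ⟨E, hE, rfl⟩ := Finset.mem_image.mp hg
      exact Finset.mem_image_of_mem φ (Finset.mem_filter.mpr ⟨hFsub hE, hcard E hE⟩)
    have hGne : G.Nonempty := hFne.image φ
    have hGint : IsIntersecting p 1 G := by
      intro G' hG'sub hG'ne hG'card
      obtain ⟨S, hSsub, hSimg, hScard⟩ := exists_preimage φ F' (hG'sub.trans (by rfl))
      have hSne : S.Nonempty := by
        rw [← Finset.image_nonempty (f := φ), hSimg]; exact hG'ne
      have hq' := hFint S hSsub hSne (hScard.trans hG'card)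
      obtain ⟨E₀, hE₀⟩ := hSne
      obtain ⟨x, hxq, hxsub⟩ := exists_qsubset hE₀ hq'
      have : x ∈ hCore G' := by
        refine mem_core hG'ne (fun g hg => ?_)
        rw [← hSimg] at hg
        obtain ⟨E, hE, rfl⟩ := Finset.mem_image.mp hg
        rw [hφ, Finset.mem_powersetCard]
        exact ⟨fun y hy => hxsub E hE hy, hxq⟩
      have hfin : (hCore G').Finite := core_finite hG'ne.choose_spec
      exact (Set.ncard_pos hfin).mpr ⟨x, this⟩
    have h1 := hΦ G hGsub hGne hGint
    obtain ⟨x, hx⟩ := Set.nonempty_of_ncard_ne_zero (s := hCore G) (by omega)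
    obtain ⟨E₀, hE₀⟩ := id hFne
    have hxsub : ↑x ⊆ hCore F' := by
      intro y hy
      refine mem_core hFne (fun E hE => ?_)
      have := hx.2 (φ E) (Finset.mem_image_of_mem φ hE)
      rw [hφ, Finset.mem_powersetCard] at this
      exact this.1 hy
    have hxq : x.card = q := by
      have := hx.2 (φ E₀) (Finset.mem_image_of_mem φ hE₀)
      rw [hφ, Finset.mem_powersetCard] at this
      exact this.2
    calc q = (↑x : Set α).ncard := by rw [Set.ncard_coe_finset, hxq]
      _ ≤ (hCore F').ncard := Set.ncard_le_ncard hxsub (core_finite hE₀)
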